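/- Let z be a point of X_{F_2}(m) and y a point of X_F(m). There exists a triangulation T of the (m+1)-gon that z properly colors but y does not if and only if I(y) is not a subset of I(z), where I(w) denotes the set of diagonals invalid for w. -/

import Mathlib

/-- The projective line over a field `F`. -/
abbrev P1 (F : Type*) [Field F] := Projectivization F (F × F)

/-- The point `[1:0]` of the projective line. -/
noncomputable def ptZero (F : Type*) [Field F] : P1 F :=
  Projectivization.mk F (1, 0) (fun h => one_ne_zero (congrArg Prod.fst h))

/-- The point `[0:1]` of the projective line. -/
noncomputable def ptInf (F : Type*) [Field F] : P1 F :=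
  Projectivization.mk F (0, 1) (fun h => one_ne_zero (congrArg Prod.snd h))

/-- The point `[1:1]` of the projective line. -/
noncomputable def ptOne (F : Type*) [Field F] : P1 F :=
  Projectivization.mk F (1, 1) (fun h => one_ne_zero (congrArg Prod.fst h))

/-- `p = (i, j)` is a diagonal of the convex `(m+1)`-gon with vertices `0, …, m`:
`i < j`, the two vertices are not consecutive, and `(0, m)` is excluded (it is a side). -/
def IsDiag (m : ℕ) (p : ℕ × ℕ) : Prop :=
  p.1 + 2 ≤ p.2 ∧ p.2 ≤ m ∧ ¬(p.1 = 0 ∧ p.2 = m)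

instance (m : ℕ) (p : ℕ × ℕ) : Decidable (IsDiag m p) := by unfold IsDiag; infer_instance

/-- The type of diagonals of the convex `(m+1)`-gon. -/
abbrev Diagonal (m : ℕ) := {p : ℕ × ℕ // IsDiag m p}

/-- Two diagonals cross in the interior of the polygon. -/
def Crossing {m : ℕ} (d e : Diagonal m) : Prop :=
  (d.val.1 < e.val.1 ∧ e.val.1 < d.val.2 ∧ d.val.2 < e.val.2) ∨
  (e.val.1 < d.val.1 ∧ d.val.1 < e.val.2 ∧ e.val.2 < d.val.2)

/-- A triangulation of the convex `(m+1)`-gon: a maximal set of pairwise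
non-crossing diagonals (maximality = having `(m+1) - 3` diagonals). -/
structure Triangulation (m : ℕ) where
  diags : Finset (Diagonal m)
  noncross : ∀ d ∈ diags, ∀ e ∈ diags, ¬ Crossing d e
  card_eq : diags.card = m - 2

/-- `y` takes distinct values on the endpoints of every diagonal of `T`
(i.e. `y` lies in the cluster torus of `T`). -/
def ProperDiags {F : Type*} [Field F] {m : ℕ} (T : Triangulation m) (y : ℕ → P1 F) : Prop :=
  ∀ d ∈ T.diags, y d.val.1 ≠ y d.val.2

/-- `c` is a proper coloring of the full graph of the triangulation `T`
(sides of the polygon together with the diagonals of `T`). -/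
def ProperGraph {F : Type*} [Field F] {m : ℕ} (T : Triangulation m) (c : ℕ → P1 F) : Prop :=
  (∀ i < m, c i ≠ c (i + 1)) ∧ c m ≠ c 0 ∧ ProperDiags T c

/-- `y` is a point of `X_F(m)`: `y 0 = [1:0]`, `y m = [0:1]`, consecutive entries distinct. -/
def XCond (F : Type*) [Field F] (m : ℕ) (y : ℕ → P1 F) : Prop :=
  y 0 = ptZero F ∧ y m = ptInf F ∧ ∀ i < m, y i ≠ y (i + 1)

/-- `y` is the alternating sequence `([1:0], [0:1], [1:0], …)` on `0, …, m`. -/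
def IsAltSeq (F : Type*) [Field F] (m : ℕ) (y : ℕ → P1 F) : Prop :=
  ∀ i ≤ m, y i = if i % 2 = 0 then ptZero F else ptInf F

/-- The diagonal `d` is valid for the point `y`: its endpoints have distinct labels and
on each of the two sub-polygons determined by `d` the labels take at least three values. -/
def ValidDiag (F : Type*) [Field F] (m : ℕ) (y : ℕ → P1 F) (d : Diagonal m) : Prop :=
  y d.val.1 ≠ y d.val.2 ∧
  3 ≤ (y '' (Set.Icc d.val.1 d.val.2)).ncard ∧
  3 ≤ (y '' (Set.Icc 0 d.val.1 ∪ Set.Icc d.val.2 m)).ncard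

/-- `T'` is obtained from `T` by removing the diagonals `old` and adding the diagonals `new`. -/
def SwapMove {m : ℕ} (T T' : Triangulation m) (old new : Finset (Diagonal m)) : Prop :=
  old ⊆ T.diags ∧ T'.diags = (T.diags \ old) ∪ new

/-- Zig-zag hexagonal move: inside a hexagonal sub-polygon with vertices
`v 0 < ⋯ < v 5`, replace the zig-zag `{15, 35, 36}` by the zig-zag `{24, 26, 46}`
(in the labels `1, …, 6` of the hexagon). -/
def ZigZagMoveOne {m : ℕ} (T T' : Triangulation m) : Prop :=
  ∃ v : Fin 6 → ℕ, StrictMono v ∧ v 5 ≤ m ∧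
    ∃ (h1 : IsDiag m (v 0, v 4)) (h2 : IsDiag m (v 2, v 4)) (h3 : IsDiag m (v 2, v 5))
      (h4 : IsDiag m (v 1, v 3)) (h5 : IsDiag m (v 1, v 5)) (h6 : IsDiag m (v 3, v 5)),
      SwapMove T T' {⟨(v 0, v 4), h1⟩, ⟨(v 2, v 4), h2⟩, ⟨(v 2, v 5), h3⟩}
        {⟨(v 1, v 3), h4⟩, ⟨(v 1, v 5), h5⟩, ⟨(v 3, v 5), h6⟩}

/-- Inscribed-triangle hexagonal move: inside a hexagonal sub-polygon with vertices
`v 0 < ⋯ < v 5`, replace the inscribed triangle `{13, 35, 51}` by `{24, 46, 62}`. -/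
def InscribedMoveOne {m : ℕ} (T T' : Triangulation m) : Prop :=
  ∃ v : Fin 6 → ℕ, StrictMono v ∧ v 5 ≤ m ∧
    ∃ (h1 : IsDiag m (v 0, v 2)) (h2 : IsDiag m (v 2, v 4)) (h3 : IsDiag m (v 0, v 4))
      (h4 : IsDiag m (v 1, v 3)) (h5 : IsDiag m (v 3, v 5)) (h6 : IsDiag m (v 1, v 5)),
      SwapMove T T' {⟨(v 0, v 2), h1⟩, ⟨(v 2, v 4), h2⟩, ⟨(v 0, v 4), h3⟩}
        {⟨(v 1, v 3), h4⟩, ⟨(v 3, v 5), h5⟩, ⟨(v 1, v 5), h6⟩}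

/-- A hexagonal move (in either direction). -/
def HexMove {m : ℕ} (T T' : Triangulation m) : Prop :=
  ZigZagMoveOne T T' ∨ ZigZagMoveOne T' T ∨ InscribedMoveOne T T' ∨ InscribedMoveOne T' T




namespace Stmt16Aux

/-- vertices of `A` strictly between the endpoints of `p`. -/
def betw (A : Finset ℕ) (p : ℕ × ℕ) : Finset ℕ := A.filter (fun t => p.1 < t ∧ t < p.2)

/-- vertices of `A` strictly outside the interval of `p`. -/
def outs (A : Finset ℕ) (p : ℕ × ℕ) : Finset ℕ := A.filter (fun t => t < p.1 ∨ p.2 < t)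

/-- `p` is a diagonal of the polygon with vertex set `A` (cyclic order = increasing order). -/
def PDiag (A : Finset ℕ) (p : ℕ × ℕ) : Prop :=
  p.1 ∈ A ∧ p.2 ∈ A ∧ p.1 < p.2 ∧ (betw A p).Nonempty ∧ (outs A p).Nonempty

/-- two pairs do not cross. -/
def NCross (p q : ℕ × ℕ) : Prop :=
  ¬((p.1 < q.1 ∧ q.1 < p.2 ∧ p.2 < q.2) ∨ (q.1 < p.1 ∧ p.1 < q.2 ∧ q.2 < p.2))

/-- `u`, `v` are cyclically adjacent vertices of the polygon on `A`. -/
def AdjF (A : Finset ℕ) (u v : ℕ) : Prop :=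
  u ∈ A ∧ v ∈ A ∧ u < v ∧
    ((A.filter (fun t => u < t ∧ t < v)) = ∅ ∨
     ((A.filter (fun t => t < u)) = ∅ ∧ (A.filter (fun t => v < t)) = ∅))

/-- `p` is an ear of the polygon on `A`: it cuts off a single vertex. -/
def EarF (A : Finset ℕ) (p : ℕ × ℕ) : Prop := (betw A p).card = 1 ∨ (outs A p).card = 1

lemma card_ge_of_pdiag {A : Finset ℕ} {p : ℕ × ℕ} (h : PDiag A p) :
    (betw A p).card + 3 ≤ A.card := by
  obtain ⟨h1, h2, hlt, hb, ⟨x, hx⟩⟩ := h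
  have hxA : x ∈ A := (Finset.mem_filter.1 hx).1
  have hxo : x < p.1 ∨ p.2 < x := (Finset.mem_filter.1 hx).2
  have hsub : insert x (insert p.1 (insert p.2 (betw A p))) ⊆ A := by
    intro t ht
    simp only [Finset.mem_insert] at ht
    rcases ht with rfl | rfl | rfl | ht
    · exact hxA
    · exact h1
    · exact h2
    · exact (Finset.mem_filter.1 ht).1
  have hp2 : p.2 ∉ betw A p := by
    simp only [betw, Finset.mem_filter, not_and]
    intro _ h
    omega
  have hp1 : p.1 ∉ insert p.2 (betw A p) := by
    simp only [Finset.mem_insert, betw, Finset.mem_filter, not_or, not_and]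
    exact ⟨by omega, fun _ h => by omega⟩
  have hx' : x ∉ insert p.1 (insert p.2 (betw A p)) := by
    simp only [Finset.mem_insert, betw, Finset.mem_filter, not_or, not_and]
    exact ⟨by omega, by omega, fun _ h => by omega⟩
  calc (betw A p).card + 3
      = (insert x (insert p.1 (insert p.2 (betw A p)))).card := by
        rw [Finset.card_insert_of_notMem hx', Finset.card_insert_of_notMem hp1,
          Finset.card_insert_of_notMem hp2]
    _ ≤ A.card := Finset.card_le_card hsub

lemma erase_pdiag (A : Finset ℕ) (S : Finset (ℕ × ℕ))
    (hP : ∀ p ∈ S, PDiag A p) (hN : ∀ p ∈ S, ∀ q ∈ S, NCross p q)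
    (p : ℕ × ℕ) (hpS : p ∈ S)
    (hpmin : ∀ q ∈ S, (betw A p).card ≤ (betw A q).card) :
    ∀ q ∈ S.erase p, PDiag (A \ betw A p) q := by
  set k := (betw A p).card with hk
  -- every other diagonal has endpoints outside the open interval of p
  have hout : ∀ q ∈ S, q ≠ p → q.1 ∉ betw A p ∧ q.2 ∉ betw A p := by
    intro q hq hqp
    have hPq := hP q hq
    have hNC := hN p hpS q hq
    -- q cannot be strictly inside p
    have hnotin : ¬ (p.1 ≤ q.1 ∧ q.2 ≤ p.2) := by
      rintro ⟨hq1, hq2⟩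
      have hqlt' : q.1 < q.2 := hPq.2.2.1
      have hsub : betw A q ⊆ betw A p := by
        intro t ht
        simp only [betw, Finset.mem_filter] at ht ⊢
        exact ⟨ht.1, by omega⟩
      have hss : betw A q ⊂ betw A p := by
        refine ⟨hsub, fun hsub' => ?_⟩
        have : q.1 = p.1 ∨ q.1 > p.1 := by omega
        rcases lt_or_eq_of_le hq1 with h1 | h1
        · have : q.1 ∈ betw A p := by
            simp only [betw, Finset.mem_filter]
            exact ⟨hPq.1, h1, lt_of_lt_of_le hPq.2.2.1 hq2⟩
          have : q.1 ∈ betw A q := hsub' this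
          simp [betw, Finset.mem_filter] at this
        · rcases lt_or_eq_of_le hq2 with h2 | h2
          · have : q.2 ∈ betw A p := by
              simp only [betw, Finset.mem_filter]
              refine ⟨hPq.2.1, by omega, h2⟩
            have : q.2 ∈ betw A q := hsub' this
            simp [betw, Finset.mem_filter] at this
          · exact hqp (Prod.ext h1.symm h2)
      have := Finset.card_lt_card hss
      have := hpmin q hq
      omega
    constructor
    · intro hmem
      obtain ⟨hmA, hm1, hm2⟩ := Finset.mem_filter.1 hmem
      have hq2 : q.2 ≤ p.2 := by
        by_contra hcon
        push_neg at hcon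
        exact hNC (Or.inl ⟨hm1, hm2, hcon⟩)
      exact hnotin ⟨by omega, hq2⟩
    · intro hmem
      obtain ⟨hmA, hm1, hm2⟩ := Finset.mem_filter.1 hmem
      have hq1 : p.1 ≤ q.1 := by
        by_contra hcon
        push_neg at hcon
        exact hNC (Or.inr ⟨hcon, hm1, hm2⟩)
      exact hnotin ⟨hq1, by omega⟩
  -- pass to A minus the inside of p
  set A' := A \ betw A p with hA'
  have hbsub : betw A p ⊆ A := Finset.filter_subset _ _
  have hA'card : A'.card = A.card - k := Finset.card_sdiff_of_subset hbsub
  have hmemA' : ∀ t, t ∈ A' ↔ t ∈ A ∧ ¬(p.1 < t ∧ t < p.2) := by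
    intro t
    simp only [hA', Finset.mem_sdiff, betw, Finset.mem_filter]
    tauto
  have hP' : ∀ q ∈ S.erase p, PDiag A' q := by
    intro q hq
    have hqS := Finset.mem_of_mem_erase hq
    have hqp := Finset.ne_of_mem_erase hq
    have hPq := hP q hqS
    obtain ⟨hq1A, hq2A, hqlt, ⟨b, hb⟩, ⟨o, ho⟩⟩ := hPq
    have hob := hout q hqS hqp
    refine ⟨?_, ?_, hqlt, ?_, ?_⟩
    · rw [hmemA' q.1]
      refine ⟨hq1A, ?_⟩
      intro hc
      exact hob.1 (by simp [betw, Finset.mem_filter]; exact ⟨hq1A, hc⟩)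
    · rw [hmemA' q.2]
      refine ⟨hq2A, ?_⟩
      intro hc
      exact hob.2 (by simp [betw, Finset.mem_filter]; exact ⟨hq2A, hc⟩)
    · -- between nonempty in A'
      simp only [betw, Finset.mem_filter] at hb
      by_cases hbin : p.1 < b ∧ b < p.2
      · -- then p is nested inside q; use p.1 or p.2 as witness
        have hq1p1 : q.1 ≤ p.1 := by
          by_contra hcon
          push_neg at hcon
          have : q.1 ∈ betw A p := by
            simp only [betw, Finset.mem_filter]
            exact ⟨hq1A, hcon, by omega⟩
          exact hob.1 this
        have hq2p2 : p.2 ≤ q.2 := by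
          by_contra hcon
          push_neg at hcon
          have : q.2 ∈ betw A p := by
            simp only [betw, Finset.mem_filter]
            exact ⟨hq2A, by omega, hcon⟩
          exact hob.2 this
        rcases lt_or_eq_of_le hq1p1 with h1 | h1
        · refine ⟨p.1, ?_⟩
          simp only [betw, Finset.mem_filter]
          rw [hmemA' p.1]
          exact ⟨⟨(hP p hpS).1, by omega⟩, h1, by omega⟩
        · rcases lt_or_eq_of_le hq2p2 with h2 | h2
          · refine ⟨p.2, ?_⟩
            simp only [betw, Finset.mem_filter]
            rw [hmemA' p.2]
            exact ⟨⟨(hP p hpS).2.1, by omega⟩, by omega, h2⟩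
          · exact absurd (Prod.ext h1 h2.symm) (by simpa using hqp)
      · refine ⟨b, ?_⟩
        simp only [betw, Finset.mem_filter]
        rw [hmemA' b]
        exact ⟨⟨hb.1, hbin⟩, hb.2⟩
    · -- outside nonempty in A'
      simp only [outs, Finset.mem_filter] at ho
      by_cases hoin : p.1 < o ∧ o < p.2
      · -- replace by p.1 or p.2
        rcases ho.2 with h | h
        · refine ⟨p.1, ?_⟩
          simp only [outs, Finset.mem_filter]
          rw [hmemA' p.1]
          exact ⟨⟨(hP p hpS).1, by omega⟩, by omega⟩
        · refine ⟨p.2, ?_⟩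
          simp only [outs, Finset.mem_filter]
          rw [hmemA' p.2]
          exact ⟨⟨(hP p hpS).2.1, by omega⟩, by omega⟩
      · refine ⟨o, ?_⟩
        simp only [outs, Finset.mem_filter]
        rw [hmemA' o]
        exact ⟨⟨ho.1, hoin⟩, ho.2⟩
  exact hP'

/-- Upper bound: a pairwise noncrossing family of diagonals of the polygon on `A`
has at most `|A| - 3` elements. -/
lemma card_noncross_le : ∀ n (A : Finset ℕ) (S : Finset (ℕ × ℕ)), A.card ≤ n →
    (∀ p ∈ S, PDiag A p) → (∀ p ∈ S, ∀ q ∈ S, NCross p q) → S.card ≤ A.card - 3 := by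
  intro n
  induction n with
  | zero =>
    intro A S hA hP _
    rcases S.eq_empty_or_nonempty with rfl | ⟨p, hp⟩
    · simp
    · have := card_ge_of_pdiag (hP p hp)
      omega
  | succ n ih =>
    intro A S hA hP hN
    rcases S.eq_empty_or_nonempty with rfl | hS
    · simp
    obtain ⟨p, hpS, hpmin⟩ := S.exists_min_image (fun p => (betw A p).card) hS
    have hkA := card_ge_of_pdiag (hP p hpS)
    have hk1 : 1 ≤ (betw A p).card := Finset.card_pos.2 (hP p hpS).2.2.2.1
    have hP' := erase_pdiag A S hP hN p hpS hpmin
    have hN' : ∀ q ∈ S.erase p, ∀ r ∈ S.erase p, NCross q r := fun q hq r hr =>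
      hN q (Finset.mem_of_mem_erase hq) r (Finset.mem_of_mem_erase hr)
    have hbsub : betw A p ⊆ A := Finset.filter_subset _ _
    have hA'card : (A \ betw A p).card = A.card - (betw A p).card := Finset.card_sdiff_of_subset hbsub
    have hrec := ih (A \ betw A p) (S.erase p) (by omega) hP' hN'
    have hce : (S.erase p).card = S.card - 1 := Finset.card_erase_of_mem hpS
    omega

/-- A full triangulation of a polygon with at least 4 vertices contains an ear. -/
lemma exists_ear (A : Finset ℕ) (S : Finset (ℕ × ℕ))
    (hP : ∀ p ∈ S, PDiag A p) (hN : ∀ p ∈ S, ∀ q ∈ S, NCross p q)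
    (hcard : A.card - 3 ≤ S.card) (h4 : 4 ≤ A.card) :
    ∃ p ∈ S, EarF A p := by
  have hS : S.Nonempty := by
    rw [← Finset.card_pos]
    omega
  obtain ⟨p, hpS, hpmin⟩ := S.exists_min_image (fun p => (betw A p).card) hS
  have hkA := card_ge_of_pdiag (hP p hpS)
  have hk1 : 1 ≤ (betw A p).card := Finset.card_pos.2 (hP p hpS).2.2.2.1
  have hP' := erase_pdiag A S hP hN p hpS hpmin
  have hN' : ∀ q ∈ S.erase p, ∀ r ∈ S.erase p, NCross q r := fun q hq r hr =>
    hN q (Finset.mem_of_mem_erase hq) r (Finset.mem_of_mem_erase hr)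
  have hbsub : betw A p ⊆ A := Finset.filter_subset _ _
  have hA'card : (A \ betw A p).card = A.card - (betw A p).card := Finset.card_sdiff_of_subset hbsub
  have hup := card_noncross_le A.card A S le_rfl hP hN
  have hrec := card_noncross_le (A \ betw A p).card (A \ betw A p) (S.erase p) le_rfl hP' hN'
  have hce : (S.erase p).card = S.card - 1 := Finset.card_erase_of_mem hpS
  refine ⟨p, hpS, Or.inl ?_⟩
  omega

section Colors

variable {β : Type*}

/-- From an ear one gets a vertex cyclically adjacent to both endpoints. -/
lemma ear_triple {A : Finset ℕ} {p : ℕ × ℕ} (hp : PDiag A p) (he : EarF A p)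
    {c : ℕ → β} (hadj : ∀ u v, AdjF A u v → c u ≠ c v) :
    ∃ x ∈ A, c x ≠ c p.1 ∧ c x ≠ c p.2 := by
  obtain ⟨h1A, h2A, hlt, _, _⟩ := hp
  rcases he with he | he
  · obtain ⟨x, hx⟩ := Finset.card_eq_one.1 he
    have hxm : x ∈ betw A p := by rw [hx]; exact Finset.mem_singleton_self x
    obtain ⟨hxA, hx1, hx2⟩ := Finset.mem_filter.1 hxm
    have hsingle : ∀ t ∈ A, p.1 < t → t < p.2 → t = x := by
      intro t ht h1 h2
      have : t ∈ betw A p := Finset.mem_filter.2 ⟨ht, h1, h2⟩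
      rw [hx] at this
      exact Finset.mem_singleton.1 this
    refine ⟨x, hxA, ?_, ?_⟩
    · refine (hadj p.1 x ⟨h1A, hxA, hx1, Or.inl ?_⟩).symm
      rw [Finset.filter_eq_empty_iff]
      intro t ht hc
      have := hsingle t ht hc.1 (by omega)
      omega
    · refine hadj x p.2 ⟨hxA, h2A, hx2, Or.inl ?_⟩
      rw [Finset.filter_eq_empty_iff]
      intro t ht hc
      have := hsingle t ht (by omega) hc.2
      omega
  · obtain ⟨x, hx⟩ := Finset.card_eq_one.1 he
    have hxm : x ∈ outs A p := by rw [hx]; exact Finset.mem_singleton_self x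
    obtain ⟨hxA, hxo⟩ := Finset.mem_filter.1 hxm
    have hsingle : ∀ t ∈ A, (t < p.1 ∨ p.2 < t) → t = x := by
      intro t ht h1
      have : t ∈ outs A p := Finset.mem_filter.2 ⟨ht, h1⟩
      rw [hx] at this
      exact Finset.mem_singleton.1 this
    rcases hxo with hxo | hxo
    · refine ⟨x, hxA, ?_, ?_⟩
      · refine hadj x p.1 ⟨hxA, h1A, hxo, Or.inl ?_⟩
        rw [Finset.filter_eq_empty_iff]
        intro t ht hc
        have := hsingle t ht (Or.inl hc.2)
        omega
      · refine hadj x p.2 ⟨hxA, h2A, by omega, Or.inr ⟨?_, ?_⟩⟩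
        · rw [Finset.filter_eq_empty_iff]
          intro t ht hc
          have := hsingle t ht (Or.inl (by omega))
          omega
        · rw [Finset.filter_eq_empty_iff]
          intro t ht hc
          have := hsingle t ht (Or.inr hc)
          omega
    · refine ⟨x, hxA, ?_, ?_⟩
      · refine (hadj p.1 x ⟨h1A, hxA, by omega, Or.inr ⟨?_, ?_⟩⟩).symm
        · rw [Finset.filter_eq_empty_iff]
          intro t ht hc
          have := hsingle t ht (Or.inl hc)
          omega
        · rw [Finset.filter_eq_empty_iff]
          intro t ht hc
          have := hsingle t ht (Or.inr (by omega))
          omega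
      · refine (hadj p.2 x ⟨h2A, hxA, hxo, Or.inl ?_⟩).symm
        rw [Finset.filter_eq_empty_iff]
        intro t ht hc
        have := hsingle t ht (Or.inr hc.1)
        omega

/-- Three pairwise distinct values give at least 3 colors. -/
lemma three_colors_of_triple {A : Finset ℕ} {c : ℕ → β} [DecidableEq β]
    {x u v : ℕ} (hx : x ∈ A) (hu : u ∈ A) (hv : v ∈ A)
    (h1 : c x ≠ c u) (h2 : c x ≠ c v) (h3 : c u ≠ c v) :
    3 ≤ (A.image c).card := by
  have hsub : insert (c x) (insert (c u) ({c v} : Finset β)) ⊆ A.image c := by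
    intro t ht
    simp only [Finset.mem_insert, Finset.mem_singleton] at ht
    rcases ht with rfl | rfl | rfl
    · exact Finset.mem_image_of_mem c hx
    · exact Finset.mem_image_of_mem c hu
    · exact Finset.mem_image_of_mem c hv
  have : (insert (c x) (insert (c u) ({c v} : Finset β))).card = 3 := by
    rw [Finset.card_insert_of_notMem (by simp [h1, h2]),
      Finset.card_insert_of_notMem (by simp [h3])]
    simp
  calc 3 = _ := this.symm
    _ ≤ _ := Finset.card_le_card hsub

/-- If there are at most two colors, the two neighbours of a vertex share a color. -/
lemma eq_of_two_colors {A : Finset ℕ} {c : ℕ → β} [DecidableEq β]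
    {x u v : ℕ} (hx : x ∈ A) (hu : u ∈ A) (hv : v ∈ A)
    (h2 : (A.image c).card ≤ 2) (h1 : c x ≠ c u) (h1' : c x ≠ c v) :
    c u = c v := by
  by_contra hc
  have := three_colors_of_triple hx hu hv h1 h1' hc
  omega

/-- A triangle (3 vertices, cyclically properly colored) has 3 colors. -/
lemma three_colors_of_triangle {A : Finset ℕ} {c : ℕ → β} [DecidableEq β]
    (hA : A.card = 3) (hadj : ∀ u v, AdjF A u v → c u ≠ c v) :
    3 ≤ (A.image c).card := by
  obtain ⟨x, u, v, hxu, hxv, huv, hA3⟩ := Finset.card_eq_three.1 hA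
  -- sort them
  have hmem : ∀ t, t ∈ A ↔ t = x ∨ t = u ∨ t = v := by
    intro t
    simp [hA3]
  have key : ∀ a b : ℕ, a ∈ A → b ∈ A → a < b → c a ≠ c b := by
    intro a b ha hb hab
    refine hadj a b ⟨ha, hb, hab, ?_⟩
    by_cases hbet : (A.filter (fun t => a < t ∧ t < b)) = ∅
    · exact Or.inl hbet
    · right
      obtain ⟨t, ht⟩ := Finset.nonempty_iff_ne_empty.2 hbet
      obtain ⟨htA, ht1, ht2⟩ := Finset.mem_filter.1 ht
      -- t is the third vertex, strictly between a and b; so a = min, b = max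
      constructor
      · rw [Finset.filter_eq_empty_iff]
        intro s hs
        rw [hmem] at hs htA ha hb
        rcases ha with rfl|rfl|rfl <;> rcases hb with rfl|rfl|rfl <;>
          rcases htA with rfl|rfl|rfl <;> rcases hs with rfl|rfl|rfl <;> omega
      · rw [Finset.filter_eq_empty_iff]
        intro s hs
        rw [hmem] at hs htA ha hb
        rcases ha with rfl|rfl|rfl <;> rcases hb with rfl|rfl|rfl <;>
          rcases htA with rfl|rfl|rfl <;> rcases hs with rfl|rfl|rfl <;> omega
  have hxA : x ∈ A := by rw [hmem]; tauto
  have huA : u ∈ A := by rw [hmem]; tauto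
  have hvA : v ∈ A := by rw [hmem]; tauto
  have hcxu : c x ≠ c u := by
    rcases lt_or_gt_of_ne hxu with h | h
    exacts [key x u hxA huA h, (key u x huA hxA h).symm]
  have hcxv : c x ≠ c v := by
    rcases lt_or_gt_of_ne hxv with h | h
    exacts [key x v hxA hvA h, (key v x hvA hxA h).symm]
  have hcuv : c u ≠ c v := by
    rcases lt_or_gt_of_ne huv with h | h
    exacts [key u v huA hvA h, (key v u hvA huA h).symm]
  exact three_colors_of_triple hxA huA hvA hcxu hcxv hcuv

end Colors

section NextPrev

/-- cyclic successor in `A`. -/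
noncomputable def nextV (A : Finset ℕ) (x : ℕ) : ℕ :=
  if h : (A.filter (fun t => x < t)).Nonempty then (A.filter (fun t => x < t)).min' h
  else if h2 : A.Nonempty then A.min' h2 else 0

/-- cyclic predecessor in `A`. -/
noncomputable def prevV (A : Finset ℕ) (x : ℕ) : ℕ :=
  if h : (A.filter (fun t => t < x)).Nonempty then (A.filter (fun t => t < x)).max' h
  else if h2 : A.Nonempty then A.max' h2 else 0

variable {A : Finset ℕ} {x : ℕ}

lemma nextV_above (h : (A.filter (fun t => x < t)).Nonempty) :
    nextV A x ∈ A ∧ x < nextV A x ∧ ∀ t ∈ A, x < t → nextV A x ≤ t := by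
  rw [nextV, dif_pos h]
  have h1 := (A.filter (fun t => x < t)).min'_mem h
  rw [Finset.mem_filter] at h1
  exact ⟨h1.1, h1.2, fun t ht hxt => Finset.min'_le _ t (Finset.mem_filter.2 ⟨ht, hxt⟩)⟩

lemma nextV_top (h : ¬(A.filter (fun t => x < t)).Nonempty) (hA : A.Nonempty) :
    nextV A x = A.min' hA := by
  rw [nextV, dif_neg h, dif_pos hA]

lemma prevV_below (h : (A.filter (fun t => t < x)).Nonempty) :
    prevV A x ∈ A ∧ prevV A x < x ∧ ∀ t ∈ A, t < x → t ≤ prevV A x := by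
  rw [prevV, dif_pos h]
  have h1 := (A.filter (fun t => t < x)).max'_mem h
  rw [Finset.mem_filter] at h1
  exact ⟨h1.1, h1.2, fun t ht hxt => Finset.le_max' (A.filter (fun s => s < x)) t (Finset.mem_filter.2 ⟨ht, hxt⟩)⟩

lemma prevV_bot (h : ¬(A.filter (fun t => t < x)).Nonempty) (hA : A.Nonempty) :
    prevV A x = A.max' hA := by
  rw [prevV, dif_neg h, dif_pos hA]

lemma nextV_mem (hA : A.Nonempty) : nextV A x ∈ A := by
  by_cases h : (A.filter (fun t => x < t)).Nonempty
  · exact (nextV_above h).1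
  · rw [nextV_top h hA]; exact A.min'_mem hA

lemma prevV_mem (hA : A.Nonempty) : prevV A x ∈ A := by
  by_cases h : (A.filter (fun t => t < x)).Nonempty
  · exact (prevV_below h).1
  · rw [prevV_bot h hA]; exact A.max'_mem hA

lemma nextV_ne (hx : x ∈ A) (h2 : 2 ≤ A.card) : nextV A x ≠ x := by
  have hA : A.Nonempty := ⟨x, hx⟩
  by_cases h : (A.filter (fun t => x < t)).Nonempty
  · have := (nextV_above h).2.1
    omega
  · rw [nextV_top h hA]
    -- x is the maximum; min < max since card ≥ 2
    intro hc
    -- then A = {x}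
    have hall : ∀ t ∈ A, t = x := by
      intro t ht
      have h1 : ¬ x < t := fun hlt => h ⟨t, Finset.mem_filter.2 ⟨ht, hlt⟩⟩
      have h2' : A.min' hA ≤ t := Finset.min'_le _ _ ht
      rw [hc] at h2'
      omega
    have : A ⊆ {x} := fun t ht => Finset.mem_singleton.2 (hall t ht)
    have := Finset.card_le_card this
    simp at this
    omega

lemma prevV_nextV (hx : x ∈ A) : prevV A (nextV A x) = x := by
  have hA : A.Nonempty := ⟨x, hx⟩
  by_cases h : (A.filter (fun t => x < t)).Nonempty
  · obtain ⟨hnA, hxn, hleast⟩ := nextV_above h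
    have hne : (A.filter (fun t => t < nextV A x)).Nonempty := ⟨x, Finset.mem_filter.2 ⟨hx, hxn⟩⟩
    obtain ⟨hpA, hpn, hgreat⟩ := prevV_below hne
    have h1 : x ≤ prevV A (nextV A x) := hgreat x hx hxn
    have h2 : ¬ x < prevV A (nextV A x) := fun hc => by
      have := hleast _ hpA hc
      omega
    omega
  · rw [nextV_top h hA]
    have hbot : ¬(A.filter (fun t => t < A.min' hA)).Nonempty := by
      rintro ⟨t, ht⟩
      rw [Finset.mem_filter] at ht
      have := Finset.min'_le A t ht.1
      omega
    rw [prevV_bot hbot hA]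
    -- x is the maximum of A
    have hxmax : ∀ t ∈ A, t ≤ x := by
      intro t ht
      by_contra hc
      exact h ⟨t, Finset.mem_filter.2 ⟨ht, by omega⟩⟩
    have := Finset.le_max' A x hx
    have := hxmax _ (A.max'_mem hA)
    omega

lemma nextV_nextV_ne (hx : x ∈ A) (h3 : 3 ≤ A.card) : nextV A (nextV A x) ≠ x := by
  have hA : A.Nonempty := ⟨x, hx⟩
  have h2 : 2 ≤ A.card := by omega
  intro hc
  have hn := nextV_mem (A := A) (x := x) hA
  have hne := nextV_ne hx h2
  by_cases h : (A.filter (fun t => x < t)).Nonempty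
  · obtain ⟨hnA, hxn, hleast⟩ := nextV_above h
    by_cases h' : (A.filter (fun t => nextV A x < t)).Nonempty
    · obtain ⟨hnnA, hgt, _⟩ := nextV_above h'
      omega
    · -- nextV A x is the max, so nextV (nextV x) = min = x so x = min
      rw [nextV_top h' hA] at hc
      -- then nothing strictly between x and nextV x, and nothing below x
      -- so A ⊆ {x, nextV A x}, contradicting card ≥ 3
      have hsub : A ⊆ {x, nextV A x} := by
        intro t ht
        simp only [Finset.mem_insert, Finset.mem_singleton]
        have hmin : x ≤ t := by
          have := Finset.min'_le A t ht
          omega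
        have hmax : ¬ nextV A x < t := fun hgt => h' ⟨t, Finset.mem_filter.2 ⟨ht, hgt⟩⟩
        rcases Nat.lt_trichotomy t (nextV A x) with hlt | heq | hgt
        · left
          rcases Nat.eq_or_lt_of_le hmin with heq2 | hlt2
          · omega
          · have := hleast t ht hlt2
            omega
        · right; exact heq
        · omega
      have hle := Finset.card_le_card hsub
      have hcard2 : ({x, nextV A x} : Finset ℕ).card ≤ 2 :=
        le_trans (Finset.card_insert_le _ _) (by simp)
      omega
  · rw [nextV_top h hA] at hne hc
    -- x = max
    have hxmax : ∀ t ∈ A, t ≤ x := by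
      intro t ht
      by_contra hcon
      exact h ⟨t, Finset.mem_filter.2 ⟨ht, by omega⟩⟩
    -- nextV of min: there is a third element strictly between min and max
    have hmn : A.min' hA ≤ x := Finset.min'_le A x hx
    have hmnx : A.min' hA < x := by omega
    have h' : (A.filter (fun t => A.min' hA < t)).Nonempty :=
      ⟨x, Finset.mem_filter.2 ⟨hx, hmnx⟩⟩
    obtain ⟨hnnA, hgt, hleast⟩ := nextV_above h'
    rw [hc] at hleast
    have hsub : A ⊆ {A.min' hA, x} := by
      intro t ht
      simp only [Finset.mem_insert, Finset.mem_singleton]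
      have ht1 := Finset.min'_le A t ht
      have ht2 := hxmax t ht
      rcases Nat.lt_or_ge (A.min' hA) t with hlt | hge
      · have := hleast t ht hlt
        omega
      · omega
    have hle := Finset.card_le_card hsub
    have hcard2 : ({A.min' hA, x} : Finset ℕ).card ≤ 2 :=
      le_trans (Finset.card_insert_le _ _) (by simp)
    omega

lemma adjF_next (hx : x ∈ A) (h2 : 2 ≤ A.card) :
    AdjF A x (nextV A x) ∨ AdjF A (nextV A x) x := by
  have hA : A.Nonempty := ⟨x, hx⟩
  by_cases h : (A.filter (fun t => x < t)).Nonempty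
  · obtain ⟨hnA, hxn, hleast⟩ := nextV_above h
    left
    refine ⟨hx, hnA, hxn, Or.inl ?_⟩
    rw [Finset.filter_eq_empty_iff]
    intro t ht hc
    have := hleast t ht hc.1
    omega
  · right
    rw [nextV_top h hA]
    have hmn : A.min' hA ≤ x := Finset.min'_le A x hx
    have hne := nextV_ne hx h2
    rw [nextV_top h hA] at hne
    refine ⟨A.min'_mem hA, hx, by omega, Or.inr ⟨?_, ?_⟩⟩
    · rw [Finset.filter_eq_empty_iff]
      intro t ht hc
      have := Finset.min'_le A t ht
      omega
    · rw [Finset.filter_eq_empty_iff]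
      intro t ht hc
      exact h ⟨t, Finset.mem_filter.2 ⟨ht, hc⟩⟩

lemma orbit (P : ℕ → Prop) (hA : A.Nonempty)
    (x0 : ℕ) (hx0 : x0 ∈ A) (hP0 : P x0)
    (hclosed : ∀ y ∈ A, P y → P (nextV A y)) : ∀ y ∈ A, P y := by
  have step : ∀ z ∈ A, P z → ∀ y, y ∈ A → z ≤ y → P y := by
    intro z hz hPz y
    induction y using Nat.strong_induction_on with
    | _ y ih =>
      intro hy hzy
      rcases eq_or_lt_of_le hzy with rfl | hlt
      · exact hPz
      · have hQne : (A.filter (fun t => z ≤ t ∧ t < y)).Nonempty :=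
          ⟨z, Finset.mem_filter.2 ⟨hz, le_rfl, hlt⟩⟩
        set p := (A.filter (fun t => z ≤ t ∧ t < y)).max' hQne with hp
        have hpQ := (A.filter (fun t => z ≤ t ∧ t < y)).max'_mem hQne
        rw [Finset.mem_filter] at hpQ
        obtain ⟨hpA, hzp, hpy⟩ := hpQ
        have hPp : P p := ih p hpy hpA hzp
        have hnexty : nextV A p = y := by
          have hne : (A.filter (fun t => p < t)).Nonempty :=
            ⟨y, Finset.mem_filter.2 ⟨hy, hpy⟩⟩
          obtain ⟨hnA, hgt, hleast⟩ := nextV_above hne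
          have h1 : nextV A p ≤ y := hleast y hy hpy
          rcases eq_or_lt_of_le h1 with heq | hlt2
          · exact heq
          · exfalso
            have : nextV A p ∈ A.filter (fun t => z ≤ t ∧ t < y) :=
              Finset.mem_filter.2 ⟨hnA, by omega, hlt2⟩
            have := Finset.le_max' _ _ this
            rw [← hp] at this
            omega
        rw [← hnexty]
        exact hclosed p hpA hPp
  have hmaxmem := A.max'_mem hA
  have hmax : P (A.max' hA) := step x0 hx0 hP0 _ hmaxmem (Finset.le_max' A x0 hx0)
  have hminmax : nextV A (A.max' hA) = A.min' hA := by
    apply nextV_top _ hA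
    rintro ⟨t, ht⟩
    rw [Finset.mem_filter] at ht
    have := Finset.le_max' A t ht.1
    omega
  have hmin : P (A.min' hA) := by
    rw [← hminmax]
    exact hclosed _ hmaxmem hmax
  intro y hy
  exact step (A.min' hA) (A.min'_mem hA) hmin y hy (Finset.min'_le A y hy)

end NextPrev

section CutVertex

variable {β : Type*} [DecidableEq β]

/-- If the polygon on `A` is properly cyclically colored with at least 3 colors out
of a 3-element palette, and `A` has at least 4 vertices, then some vertex has
differently-colored cyclic neighbours and a non-unique color. -/
lemma exists_cut {A : Finset ℕ} {c : ℕ → β} (h4 : 4 ≤ A.card)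
    (hadj : ∀ u v, AdjF A u v → c u ≠ c v) (h3 : 3 ≤ (A.image c).card)
    (hpal : ∃ w1 w2 w3 : β, ∀ t : β, t = w1 ∨ t = w2 ∨ t = w3) :
    ∃ x ∈ A, c (prevV A x) ≠ c (nextV A x) ∧ ∃ x' ∈ A, x' ≠ x ∧ c x' = c x := by
  have hA : A.Nonempty := Finset.card_pos.1 (by omega)
  have h2 : 2 ≤ A.card := by omega
  by_contra hcon
  push_neg at hcon
  -- every "cut" vertex has a unique color
  have huniq : ∀ x ∈ A, c (prevV A x) ≠ c (nextV A x) →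
      ∀ x' ∈ A, c x' = c x → x' = x := by
    intro x hx hcut x' hx' hcx
    by_contra hne
    exact (hcon x hx hcut x' hx' hne) hcx
  by_cases hex : ∃ x ∈ A, c (prevV A x) ≠ c (nextV A x)
  · -- propagate uniqueness around the cycle; contradiction with |A| ≥ 4
    obtain ⟨x0, hx0, hcut0⟩ := hex
    have hstep : ∀ y ∈ A, (∀ x' ∈ A, c x' = c y → x' = y) →
        (∀ x' ∈ A, c x' = c (nextV A y) → x' = nextV A y) := by
      intro y hy hu
      have hnA : nextV A y ∈ A := nextV_mem hA
      apply huniq _ hnA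
      rw [prevV_nextV hy]
      intro hceq
      have hnnA : nextV A (nextV A y) ∈ A := nextV_mem hA
      have := hu _ hnnA hceq.symm
      exact nextV_nextV_ne hy (by omega) this
    have hall : ∀ y ∈ A, (∀ x' ∈ A, c x' = c y → x' = y) :=
      orbit _ hA x0 hx0 (huniq x0 hx0 hcut0) hstep
    -- c is injective on A, so |A| ≤ 3
    have hinj : Set.InjOn c ↑A := by
      intro a ha b hb hab
      exact hall b hb a ha hab
    have hcardeq : (A.image c).card = A.card := Finset.card_image_of_injOn hinj
    obtain ⟨w1, w2, w3, hw⟩ := hpal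
    have hsub : A.image c ⊆ {w1, w2, w3} := by
      intro t _
      simp only [Finset.mem_insert, Finset.mem_singleton]
      exact hw t
    have := Finset.card_le_card hsub
    have hc3 : ({w1, w2, w3} : Finset β).card ≤ 3 :=
      le_trans (Finset.card_insert_le _ _)
        (by simpa using Nat.add_le_add_right (Finset.card_insert_le w2 {w3}) 1)
    omega
  · -- no cut vertex at all: only two colors appear
    push_neg at hex
    set c0 := c (A.min' hA) with hc0
    set y0 := nextV A (A.min' hA) with hy0
    set c1 := c y0 with hc1
    have hminA := A.min'_mem hA
    have hy0A : y0 ∈ A := nextV_mem hA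
    have hstep : ∀ y ∈ A, ((c y = c0 ∨ c y = c1) ∧ (c (prevV A y) = c0 ∨ c (prevV A y) = c1)) →
        ((c (nextV A y) = c0 ∨ c (nextV A y) = c1) ∧
         (c (prevV A (nextV A y)) = c0 ∨ c (prevV A (nextV A y)) = c1)) := by
      intro y hy ⟨hcy, hcp⟩
      have heq := hex y hy
      constructor
      · rw [← heq]; exact hcp
      · rw [prevV_nextV hy]; exact hcy
    have hbase : (c y0 = c0 ∨ c y0 = c1) ∧ (c (prevV A y0) = c0 ∨ c (prevV A y0) = c1) := by
      constructor
      · right; rfl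
      · rw [hy0, prevV_nextV hminA]
        left; rfl
    have hall := orbit (fun y => (c y = c0 ∨ c y = c1) ∧
        (c (prevV A y) = c0 ∨ c (prevV A y) = c1)) hA y0 hy0A hbase hstep
    have hsub : A.image c ⊆ {c0, c1} := by
      intro t ht
      obtain ⟨a, ha, rfl⟩ := Finset.mem_image.1 ht
      simp only [Finset.mem_insert, Finset.mem_singleton]
      exact (hall a ha).1
    have := Finset.card_le_card hsub
    have hc2 : ({c0, c1} : Finset β).card ≤ 2 :=
      le_trans (Finset.card_insert_le _ _) (by simp)
    omega

end CutVertex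

end Stmt16Aux


namespace Stmt16Aux

section Spec

variable {A : Finset ℕ} {x : ℕ}

lemma prevV_char {u : ℕ} (hu : u ∈ A) (hlt : u < x)
    (hemp : A.filter (fun t => u < t ∧ t < x) = ∅) : prevV A x = u := by
  have hne : (A.filter (fun t => t < x)).Nonempty := ⟨u, Finset.mem_filter.2 ⟨hu, hlt⟩⟩
  obtain ⟨hpA, hpx, hgreat⟩ := prevV_below hne
  have h1 : u ≤ prevV A x := hgreat u hu hlt
  rcases eq_or_lt_of_le h1 with heq | hlt2
  · omega
  · exfalso
    have : prevV A x ∈ A.filter (fun t => u < t ∧ t < x) :=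
      Finset.mem_filter.2 ⟨hpA, hlt2, hpx⟩
    rw [hemp] at this
    simp at this

lemma nextV_char {v : ℕ} (hv : v ∈ A) (hlt : x < v)
    (hemp : A.filter (fun t => x < t ∧ t < v) = ∅) : nextV A x = v := by
  have hne : (A.filter (fun t => x < t)).Nonempty := ⟨v, Finset.mem_filter.2 ⟨hv, hlt⟩⟩
  obtain ⟨hnA, hxn, hleast⟩ := nextV_above hne
  have h1 : nextV A x ≤ v := hleast v hv hlt
  rcases eq_or_lt_of_le h1 with heq | hlt2
  · omega
  · exfalso
    have : nextV A x ∈ A.filter (fun t => x < t ∧ t < v) :=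
      Finset.mem_filter.2 ⟨hnA, hxn, hlt2⟩
    rw [hemp] at this
    simp at this

lemma exists_fourth {a b c : ℕ} (h4 : 4 ≤ A.card) :
    ∃ t ∈ A, t ≠ a ∧ t ≠ b ∧ t ≠ c := by
  by_contra hcon
  push_neg at hcon
  have hsub : A ⊆ {a, b, c} := by
    intro t ht
    have := hcon t ht
    simp only [Finset.mem_insert, Finset.mem_singleton]
    tauto
  have := Finset.card_le_card hsub
  have hc3 : ({a, b, c} : Finset ℕ).card ≤ 3 :=
    le_trans (Finset.card_insert_le _ _)
      (by simpa using Nat.add_le_add_right (Finset.card_insert_le b {c}) 1)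
  omega

lemma pdiag_mono {A B : Finset ℕ} {p : ℕ × ℕ} (hAB : A ⊆ B) (h : PDiag A p) :
    PDiag B p := by
  obtain ⟨h1, h2, h3, ⟨b, hb⟩, ⟨o, ho⟩⟩ := h
  simp only [betw, Finset.mem_filter] at hb
  simp only [outs, Finset.mem_filter] at ho
  refine ⟨hAB h1, hAB h2, h3, ⟨b, ?_⟩, ⟨o, ?_⟩⟩
  · simp only [betw, Finset.mem_filter]
    exact ⟨hAB hb.1, hb.2⟩
  · simp only [outs, Finset.mem_filter]
    exact ⟨hAB ho.1, ho.2⟩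

lemma adjF_not_pdiag {u v : ℕ} (h : AdjF A u v) : ¬ PDiag A (u, v) := by
  obtain ⟨hu, hv, hlt, hcase⟩ := h
  rintro ⟨_, _, _, ⟨b, hb⟩, ⟨o, ho⟩⟩
  simp only [betw, Finset.mem_filter] at hb
  simp only [outs, Finset.mem_filter] at ho
  rcases hcase with hc | hc
  · have : b ∈ A.filter (fun t => u < t ∧ t < v) := Finset.mem_filter.2 ⟨hb.1, hb.2⟩
    rw [hc] at this
    simp at this
  · rcases ho.2 with h1 | h1
    · have : o ∈ A.filter (fun t => t < u) := Finset.mem_filter.2 ⟨ho.1, h1⟩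
      rw [hc.1] at this
      simp at this
    · have : o ∈ A.filter (fun t => v < t) := Finset.mem_filter.2 ⟨ho.1, h1⟩
      rw [hc.2] at this
      simp at this

lemma adjF_ncross {u v : ℕ} {q : ℕ × ℕ} (h : AdjF A u v) (hq : PDiag A q) :
    NCross (u, v) q ∧ NCross q (u, v) := by
  obtain ⟨hu, hv, hlt, hcase⟩ := h
  obtain ⟨hq1, hq2, hqlt, _, _⟩ := hq
  rcases hcase with hc | hc
  · rw [Finset.filter_eq_empty_iff] at hc
    have hnq1 : ¬(u < q.1 ∧ q.1 < v) := fun hcc => hc hq1 hcc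
    have hnq2 : ¬(u < q.2 ∧ q.2 < v) := fun hcc => hc hq2 hcc
    constructor <;> · rintro (⟨a1, a2, a3⟩ | ⟨a1, a2, a3⟩) <;> simp_all <;> omega
  · obtain ⟨hc1, hc2⟩ := hc
    rw [Finset.filter_eq_empty_iff] at hc1 hc2
    have h1 : ¬ q.1 < u := fun hcc => hc1 hq1 hcc
    have h2 : ¬ v < q.2 := fun hcc => hc2 hq2 hcc
    constructor <;> · rintro (⟨a1, a2, a3⟩ | ⟨a1, a2, a3⟩) <;> simp_all <;> omega

end Spec

end Stmt16Aux

namespace Stmt16Aux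

lemma neighbors_spec {A : Finset ℕ} {x : ℕ} (hx : x ∈ A) (h4 : 4 ≤ A.card) :
    ∃ e : ℕ × ℕ,
      (e = (prevV A x, nextV A x) ∨ e = (nextV A x, prevV A x)) ∧
      e.1 ∈ A.erase x ∧ e.2 ∈ A.erase x ∧ e.1 < e.2 ∧
      AdjF (A.erase x) e.1 e.2 ∧
      (betw A e = {x} ∨ outs A e = {x}) ∧
      (∀ u v, AdjF (A.erase x) u v → AdjF A u v ∨ (u = e.1 ∧ v = e.2)) := by
  have hA : A.Nonempty := ⟨x, hx⟩
  by_cases hbelow : (A.filter (fun t => t < x)).Nonempty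
  · by_cases habove : (A.filter (fun t => x < t)).Nonempty
    · -- x interior
      obtain ⟨huA, hux, hugreat⟩ := prevV_below hbelow
      obtain ⟨hvA, hxv, hvleast⟩ := nextV_above habove
      set u := prevV A x
      set v := nextV A x
      have hgap1 : ∀ t ∈ A, ¬(u < t ∧ t < x) := fun t ht hc => by
        have := hugreat t ht hc.2; omega
      have hgap2 : ∀ t ∈ A, ¬(x < t ∧ t < v) := fun t ht hc => by
        have := hvleast t ht hc.1; omega
      refine ⟨(u, v), Or.inl rfl, Finset.mem_erase.2 ⟨by omega, huA⟩,
        Finset.mem_erase.2 ⟨by omega, hvA⟩, by omega, ?_, ?_, ?_⟩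
      · refine ⟨Finset.mem_erase.2 ⟨by omega, huA⟩, Finset.mem_erase.2 ⟨by omega, hvA⟩,
          by omega, Or.inl ?_⟩
        rw [Finset.filter_eq_empty_iff]
        intro t ht hc
        obtain ⟨htx, htA⟩ := Finset.mem_erase.1 ht
        rcases Nat.lt_trichotomy t x with h | h | h
        · exact hgap1 t htA ⟨hc.1, h⟩
        · exact htx h
        · exact hgap2 t htA ⟨h, hc.2⟩
      · left
        ext t
        simp only [betw, Finset.mem_filter, Finset.mem_singleton]
        constructor
        · rintro ⟨htA, h1, h2⟩
          rcases Nat.lt_trichotomy t x with h | h | h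
          · exact absurd ⟨h1, h⟩ (hgap1 t htA)
          · exact h
          · exact absurd ⟨h, h2⟩ (hgap2 t htA)
        · rintro rfl
          exact ⟨hx, hux, hxv⟩
      · -- lifting adjacency
        intro a b hab
        obtain ⟨haA', hbA', habl, hcase⟩ := hab
        obtain ⟨hax, haA⟩ := Finset.mem_erase.1 haA'
        obtain ⟨hbx, hbA⟩ := Finset.mem_erase.1 hbA'
        rcases hcase with hc | hc
        · rw [Finset.filter_eq_empty_iff] at hc
          by_cases hxin : a < x ∧ x < b
          · right
            have ha' : prevV A x = a := by
              apply prevV_char haA hxin.1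
              rw [Finset.filter_eq_empty_iff]
              intro t ht hct
              have htx : t ≠ x := by omega
              exact hc (Finset.mem_erase.2 ⟨htx, ht⟩) ⟨hct.1, by omega⟩
            have hb' : nextV A x = b := by
              apply nextV_char hbA hxin.2
              rw [Finset.filter_eq_empty_iff]
              intro t ht hct
              have htx : t ≠ x := by omega
              exact hc (Finset.mem_erase.2 ⟨htx, ht⟩) ⟨by omega, hct.2⟩
            exact ⟨ha'.symm, hb'.symm⟩
          · left
            refine ⟨haA, hbA, habl, Or.inl ?_⟩
            rw [Finset.filter_eq_empty_iff]
            intro t ht hct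
            by_cases htx : t = x
            · subst htx
              exact hxin ⟨hct.1, hct.2⟩
            · exact hc (Finset.mem_erase.2 ⟨htx, ht⟩) hct
        · obtain ⟨hc1, hc2⟩ := hc
          rw [Finset.filter_eq_empty_iff] at hc1 hc2
          left
          refine ⟨haA, hbA, habl, Or.inr ⟨?_, ?_⟩⟩
          · rw [Finset.filter_eq_empty_iff]
            intro t ht hct
            by_cases htx : t = x
            · subst htx
              -- x < a contradicts u < x and u ∈ A', u ≥ a? u < x < a impossible since u ∈ A' and u < a would need... use u
              have : ¬ u < a := fun hcc => hc1 (Finset.mem_erase.2 ⟨by omega, huA⟩) (by omega)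
              omega
            · exact hc1 (Finset.mem_erase.2 ⟨htx, ht⟩) hct
          · rw [Finset.filter_eq_empty_iff]
            intro t ht hct
            by_cases htx : t = x
            · subst htx
              have : ¬ b < v := fun hcc => hc2 (Finset.mem_erase.2 ⟨by omega, hvA⟩) (by omega)
              omega
            · exact hc2 (Finset.mem_erase.2 ⟨htx, ht⟩) hct
    · -- x is the maximum
      obtain ⟨huA, hux, hugreat⟩ := prevV_below hbelow
      have hxmax : ∀ t ∈ A, t ≤ x := by
        intro t ht
        by_contra hcc
        exact habove ⟨t, Finset.mem_filter.2 ⟨ht, by omega⟩⟩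
      have hvmin : nextV A x = A.min' hA := nextV_top habove hA
      set u := prevV A x
      set w := A.min' hA
      have hwA : w ∈ A := A.min'_mem hA
      have hwle : ∀ t ∈ A, w ≤ t := fun t ht => Finset.min'_le A t ht
      have hwu : w < u := by
        rcases eq_or_lt_of_le (hwle u huA) with heq | hlt
        · exfalso
          -- then A ⊆ {u, x}
          obtain ⟨t, ht, ht1, ht2, ht3⟩ := exists_fourth (a := u) (b := x) (c := x) h4
          have h5 := hwle t ht
          have h6 := hxmax t ht
          have h7 := hugreat t ht (by omega)
          omega
        · exact hlt
      have hgap1 : ∀ t ∈ A, ¬(u < t ∧ t < x) := fun t ht hc => by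
        have := hugreat t ht hc.2; omega
      refine ⟨(w, u), Or.inr (by simp [hvmin]), Finset.mem_erase.2 ⟨by omega, hwA⟩,
        Finset.mem_erase.2 ⟨by omega, huA⟩, hwu, ?_, ?_, ?_⟩
      · refine ⟨Finset.mem_erase.2 ⟨by omega, hwA⟩, Finset.mem_erase.2 ⟨by omega, huA⟩,
          hwu, Or.inr ⟨?_, ?_⟩⟩
        · rw [Finset.filter_eq_empty_iff]
          intro t ht hc
          obtain ⟨htx, htA⟩ := Finset.mem_erase.1 ht
          have := hwle t htA
          omega
        · rw [Finset.filter_eq_empty_iff]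
          intro t ht hc
          obtain ⟨htx, htA⟩ := Finset.mem_erase.1 ht
          have := hxmax t htA
          have := hugreat t htA (by omega)
          omega
      · right
        ext t
        simp only [outs, Finset.mem_filter, Finset.mem_singleton]
        constructor
        · rintro ⟨htA, hto⟩
          have h5 := hwle t htA
          have h6 := hxmax t htA
          rcases hto with h | h
          · omega
          · have := hgap1 t htA
            omega
        · rintro rfl
          exact ⟨hx, Or.inr (by omega)⟩
      · -- lifting adjacency
        intro a b hab
        obtain ⟨haA', hbA', habl, hcase⟩ := hab
        obtain ⟨hax, haA⟩ := Finset.mem_erase.1 haA'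
        obtain ⟨hbx, hbA⟩ := Finset.mem_erase.1 hbA'
        have hbltx : b < x := by
          have := hxmax b hbA
          omega
        rcases hcase with hc | hc
        · rw [Finset.filter_eq_empty_iff] at hc
          left
          refine ⟨haA, hbA, habl, Or.inl ?_⟩
          rw [Finset.filter_eq_empty_iff]
          intro t ht hct
          have htx : t ≠ x := by omega
          exact hc (Finset.mem_erase.2 ⟨htx, ht⟩) hct
        · obtain ⟨hc1, hc2⟩ := hc
          rw [Finset.filter_eq_empty_iff] at hc1 hc2
          right
          -- a is the minimum of A.erase x, which is w; b is the max of A.erase x, which is u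
          constructor
          · have h5 : ¬ w < a := fun hcc => hc1 (Finset.mem_erase.2 ⟨by omega, hwA⟩) hcc
            have h6 := hwle a haA
            omega
          · have h5 : ¬ b < u := fun hcc => hc2 (Finset.mem_erase.2 ⟨by omega, huA⟩) hcc
            have h6 := hugreat b hbA hbltx
            omega
  · -- x is the minimum
    have hxmin : ∀ t ∈ A, x ≤ t := by
      intro t ht
      by_contra hcc
      exact hbelow ⟨t, Finset.mem_filter.2 ⟨ht, by omega⟩⟩
    have habove : (A.filter (fun t => x < t)).Nonempty := by
      obtain ⟨t, ht, ht1, ht2, ht3⟩ := exists_fourth (a := x) (b := x) (c := x) h4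
      exact ⟨t, Finset.mem_filter.2 ⟨ht, by have := hxmin t ht; omega⟩⟩
    obtain ⟨hvA, hxv, hvleast⟩ := nextV_above habove
    have humax : prevV A x = A.max' hA := prevV_bot hbelow hA
    set v := nextV A x
    set w := A.max' hA
    have hwA : w ∈ A := A.max'_mem hA
    have hwge : ∀ t ∈ A, t ≤ w := fun t ht => Finset.le_max' A t ht
    have hvw : v < w := by
      rcases eq_or_lt_of_le (hwge v hvA) with heq | hlt
      · exfalso
        obtain ⟨t, ht, ht1, ht2, ht3⟩ := exists_fourth (a := v) (b := x) (c := x) h4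
        have h5 := hwge t ht
        have h6 := hxmin t ht
        have h7 := hvleast t ht (by omega)
        omega
      · exact hlt
    have hgap2 : ∀ t ∈ A, ¬(x < t ∧ t < v) := fun t ht hc => by
      have := hvleast t ht hc.1; omega
    refine ⟨(v, w), Or.inr (by simp [humax]), Finset.mem_erase.2 ⟨by omega, hvA⟩,
      Finset.mem_erase.2 ⟨by omega, hwA⟩, hvw, ?_, ?_, ?_⟩
    · refine ⟨Finset.mem_erase.2 ⟨by omega, hvA⟩, Finset.mem_erase.2 ⟨by omega, hwA⟩,
        hvw, Or.inr ⟨?_, ?_⟩⟩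
      · rw [Finset.filter_eq_empty_iff]
        intro t ht hc
        obtain ⟨htx, htA⟩ := Finset.mem_erase.1 ht
        have := hxmin t htA
        have := hgap2 t htA
        omega
      · rw [Finset.filter_eq_empty_iff]
        intro t ht hc
        obtain ⟨htx, htA⟩ := Finset.mem_erase.1 ht
        have := hwge t htA
        omega
    · right
      ext t
      simp only [outs, Finset.mem_filter, Finset.mem_singleton]
      constructor
      · rintro ⟨htA, hto⟩
        have h5 := hwge t htA
        have h6 := hxmin t htA
        rcases hto with h | h
        · have := hgap2 t htA
          omega
        · omega
      · rintro rfl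
        exact ⟨hx, Or.inl (by omega)⟩
    · -- lifting adjacency
      intro a b hab
      obtain ⟨haA', hbA', habl, hcase⟩ := hab
      obtain ⟨hax, haA⟩ := Finset.mem_erase.1 haA'
      obtain ⟨hbx, hbA⟩ := Finset.mem_erase.1 hbA'
      have haltx : x < a := by
        have := hxmin a haA
        omega
      rcases hcase with hc | hc
      · rw [Finset.filter_eq_empty_iff] at hc
        left
        refine ⟨haA, hbA, habl, Or.inl ?_⟩
        rw [Finset.filter_eq_empty_iff]
        intro t ht hct
        have htx : t ≠ x := by omega
        exact hc (Finset.mem_erase.2 ⟨htx, ht⟩) hct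
      · obtain ⟨hc1, hc2⟩ := hc
        rw [Finset.filter_eq_empty_iff] at hc1 hc2
        right
        constructor
        · have h5 : ¬ v < a := fun hcc => hc1 (Finset.mem_erase.2 ⟨by omega, hvA⟩) hcc
          have h6 := hvleast a haA haltx
          omega
        · have h5 : ¬ b < w := fun hcc => hc2 (Finset.mem_erase.2 ⟨by omega, hwA⟩) hcc
          have h6 := hwge b hbA
          omega

end Stmt16Aux

namespace Stmt16Aux

variable {β : Type*} [DecidableEq β]

/-- Construction: a cyclically properly 3-colored polygon with at least 3 colors
admits a triangulation by bichromatic diagonals, containing an ear. -/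
lemma constr : ∀ n (A : Finset ℕ) (c : ℕ → β), A.card ≤ n → 3 ≤ A.card →
    (∀ u v, AdjF A u v → c u ≠ c v) → 3 ≤ (A.image c).card →
    (∃ w1 w2 w3 : β, ∀ t : β, t = w1 ∨ t = w2 ∨ t = w3) →
    ∃ S : Finset (ℕ × ℕ),
      (∀ p ∈ S, PDiag A p) ∧ (∀ p ∈ S, c p.1 ≠ c p.2) ∧
      (∀ p ∈ S, ∀ q ∈ S, NCross p q) ∧
      S.card = A.card - 3 ∧
      (4 ≤ A.card → ∃ p ∈ S, EarF A p) := by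
  intro n
  induction n with
  | zero =>
    intro A c hn h3
    omega
  | succ n ih =>
    intro A c hn h3 hadj h3c hpal
    rcases eq_or_lt_of_le h3 with h3eq | h4
    · refine ⟨∅, by simp, by simp, by simp, by simp [← h3eq], by omega⟩
    · have h4 : 4 ≤ A.card := h4
      obtain ⟨x, hx, hcut, x', hx'A, hx'ne, hx'c⟩ := exists_cut h4 hadj h3c hpal
      obtain ⟨e, hor, he1, he2, helt, hadjA', hear, hlift⟩ := neighbors_spec hx h4
      obtain ⟨e1, e2⟩ := e
      simp only at he1 he2 helt hadjA' hear hlift hor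
      set A' := A.erase x with hA'
      have hA'sub : A' ⊆ A := Finset.erase_subset x A
      have hA'card : A'.card = A.card - 1 := Finset.card_erase_of_mem hx
      have hce : c e1 ≠ c e2 := by
        rcases hor with h | h
        · rw [Prod.ext_iff] at h
          simp only at h
          rw [h.1, h.2]
          exact hcut
        · rw [Prod.ext_iff] at h
          simp only at h
          rw [h.1, h.2]
          exact hcut.symm
      have hadj' : ∀ u v, AdjF A' u v → c u ≠ c v := by
        intro u v h
        rcases hlift u v h with h' | ⟨rfl, rfl⟩
        · exact hadj u v h'
        · exact hce
      have h3c' : 3 ≤ (A'.image c).card := by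
        refine le_trans h3c (Finset.card_le_card ?_)
        intro t ht
        obtain ⟨s, hs, rfl⟩ := Finset.mem_image.1 ht
        by_cases hsx : s = x
        · subst hsx
          exact Finset.mem_image.2 ⟨x', Finset.mem_erase.2 ⟨hx'ne, hx'A⟩, hx'c⟩
        · exact Finset.mem_image.2 ⟨s, Finset.mem_erase.2 ⟨hsx, hs⟩, rfl⟩
      obtain ⟨S', hS'P, hS'c, hS'N, hS'card, _⟩ :=
        ih A' c (by omega) (by omega) hadj' h3c' hpal
      have heS' : (e1, e2) ∉ S' := fun hmem => adjF_not_pdiag hadjA' (hS'P _ hmem)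
      refine ⟨insert (e1, e2) S', ?_, ?_, ?_, ?_, ?_⟩
      · intro p hp
        rcases Finset.mem_insert.1 hp with rfl | hp'
        · refine ⟨hA'sub he1, hA'sub he2, helt, ?_, ?_⟩
          · rcases hear with h | h
            · exact ⟨x, by rw [h]; exact Finset.mem_singleton_self x⟩
            · obtain ⟨t, htA, ht1, ht2, ht3⟩ :=
                exists_fourth (a := x) (b := e1) (c := e2) h4
              refine ⟨t, ?_⟩
              simp only [betw, Finset.mem_filter]
              refine ⟨htA, ?_⟩
              have : t ∉ outs A (e1, e2) := by
                rw [h]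
                simp [ht1]
              simp only [outs, Finset.mem_filter, not_and, not_or] at this
              have := this htA
              omega
          · rcases hear with h | h
            · obtain ⟨t, htA, ht1, ht2, ht3⟩ :=
                exists_fourth (a := x) (b := e1) (c := e2) h4
              refine ⟨t, ?_⟩
              simp only [outs, Finset.mem_filter]
              refine ⟨htA, ?_⟩
              have : t ∉ betw A (e1, e2) := by
                rw [h]
                simp [ht1]
              simp only [betw, Finset.mem_filter, not_and, not_lt] at this
              have := this htA
              omega
            · exact ⟨x, by rw [h]; exact Finset.mem_singleton_self x⟩
        · exact pdiag_mono hA'sub (hS'P p hp')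
      · intro p hp
        rcases Finset.mem_insert.1 hp with rfl | hp'
        · exact hce
        · exact hS'c p hp'
      · intro p hp q hq
        rcases Finset.mem_insert.1 hp with rfl | hp' <;>
          rcases Finset.mem_insert.1 hq with hq1 | hq'
        · rw [hq1]
          rintro (⟨a1, a2, a3⟩ | ⟨a1, a2, a3⟩) <;> simp only at a1 a2 a3 <;> omega
        · exact (adjF_ncross hadjA' (hS'P q hq')).1
        · rw [hq1]
          exact (adjF_ncross hadjA' (hS'P p hp')).2
        · exact hS'N p hp' q hq'
      · rw [Finset.card_insert_of_notMem heS']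
        omega
      · intro _
        refine ⟨(e1, e2), Finset.mem_insert_self _ _, ?_⟩
        rcases hear with h | h
        · exact Or.inl (by rw [h]; simp)
        · exact Or.inr (by rw [h]; simp)

end Stmt16Aux

namespace Stmt16Aux

section Glue

variable {β : Type*}

lemma hadj_icc {m a b : ℕ} {w : ℕ → β} (hcons : ∀ i < m, w i ≠ w (i + 1))
    (hb : b ≤ m) (hab : w a ≠ w b) :
    ∀ u v, AdjF (Finset.Icc a b) u v → w u ≠ w v := by
  rintro u v ⟨hu, hv, hlt, hcase⟩
  rw [Finset.mem_Icc] at hu hv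
  rcases hcase with hc | ⟨hc1, hc2⟩
  · rw [Finset.filter_eq_empty_iff] at hc
    have hv1 : v = u + 1 := by
      by_contra hcc
      exact hc (show u + 1 ∈ Finset.Icc a b by rw [Finset.mem_Icc]; omega) (by omega)
    subst hv1
    exact hcons u (by omega)
  · rw [Finset.filter_eq_empty_iff] at hc1 hc2
    have hua : u = a := by
      by_contra hcc
      exact hc1 (show a ∈ Finset.Icc a b by rw [Finset.mem_Icc]; omega) (by omega)
    have hvb : v = b := by
      by_contra hcc
      exact hc2 (show b ∈ Finset.Icc a b by rw [Finset.mem_Icc]; omega) (by omega)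
    subst hua hvb
    exact hab

lemma hadj_out {m a b : ℕ} {w : ℕ → β} (hcons : ∀ i < m, w i ≠ w (i + 1))
    (hd1 : a + 2 ≤ b) (hd2 : b ≤ m) (hab : w a ≠ w b) (h0m : w 0 ≠ w m) :
    ∀ u v, AdjF (Finset.Icc 0 a ∪ Finset.Icc b m) u v → w u ≠ w v := by
  rintro u v ⟨hu, hv, hlt, hcase⟩
  rw [Finset.mem_union, Finset.mem_Icc, Finset.mem_Icc] at hu hv
  have hu' : u ≤ a ∨ (b ≤ u ∧ u ≤ m) := by omega
  have hv' : v ≤ a ∨ (b ≤ v ∧ v ≤ m) := by omega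
  have hmem : ∀ t, t ≤ a ∨ (b ≤ t ∧ t ≤ m) → t ∈ Finset.Icc 0 a ∪ Finset.Icc b m := by
    intro t ht
    rw [Finset.mem_union, Finset.mem_Icc, Finset.mem_Icc]
    omega
  rcases hcase with hc | ⟨hc1, hc2⟩
  · rw [Finset.filter_eq_empty_iff] at hc
    by_cases hva : v ≤ a
    · have hv1 : v = u + 1 := by
        by_contra hcc
        exact hc (hmem (u + 1) (by omega)) (by omega)
      subst hv1
      exact hcons u (by omega)
    · by_cases hbu : b ≤ u
      · have hv1 : v = u + 1 := by
          by_contra hcc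
          exact hc (hmem (u + 1) (by omega)) (by omega)
        subst hv1
        exact hcons u (by omega)
      · -- u ≤ a and b ≤ v
        have hua2 : u ≤ a := by omega
        have hbv2 : b ≤ v := by omega
        have hua : u = a := by
          by_contra hcc
          exact hc (hmem a (by omega)) (by omega)
        have hvb : v = b := by
          by_contra hcc
          exact hc (hmem b (by omega)) (by omega)
        subst hua hvb
        exact hab
  · rw [Finset.filter_eq_empty_iff] at hc1 hc2
    have hu0 : u = 0 := by
      by_contra hcc
      exact hc1 (hmem 0 (by omega)) (by omega)
    have hvm : v = m := by
      by_contra hcc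
      exact hc2 (hmem m (by omega)) (by omega)
    subst hu0 hvm
    exact h0m

lemma pdiag_icc_isdiag {m a b : ℕ} (hd : IsDiag m (a, b)) {p : ℕ × ℕ}
    (hp : PDiag (Finset.Icc a b) p) : IsDiag m p := by
  obtain ⟨hd1, hd2, hd3⟩ := hd
  simp only at hd1 hd2 hd3
  obtain ⟨h1, h2, h3, ⟨t, ht⟩, _⟩ := hp
  rw [Finset.mem_Icc] at h1 h2
  simp only [betw, Finset.mem_filter, Finset.mem_Icc] at ht
  refine ⟨by omega, by omega, ?_⟩
  rintro ⟨hp1, hp2⟩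
  apply hd3
  constructor <;> omega

lemma pdiag_out_isdiag {m a b : ℕ} (hd : IsDiag m (a, b)) {p : ℕ × ℕ}
    (hp : PDiag (Finset.Icc 0 a ∪ Finset.Icc b m) p) : IsDiag m p := by
  obtain ⟨hd1, hd2, hd3⟩ := hd
  simp only at hd1 hd2 hd3
  obtain ⟨h1, h2, h3, ⟨t, ht⟩, ⟨o, ho⟩⟩ := hp
  rw [Finset.mem_union, Finset.mem_Icc, Finset.mem_Icc] at h1 h2
  simp only [betw, Finset.mem_filter, Finset.mem_union, Finset.mem_Icc] at ht
  simp only [outs, Finset.mem_filter, Finset.mem_union, Finset.mem_Icc] at ho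
  refine ⟨by omega, by omega, ?_⟩
  rintro ⟨hp1, hp2⟩
  omega

lemma ncross_inner_d {a b : ℕ} {p : ℕ × ℕ} (hp : PDiag (Finset.Icc a b) p) :
    NCross (a, b) p ∧ NCross p (a, b) := by
  obtain ⟨h1, h2, h3, _, _⟩ := hp
  rw [Finset.mem_Icc] at h1 h2
  constructor <;> · rintro (⟨c1, c2, c3⟩ | ⟨c1, c2, c3⟩) <;> omega

lemma ncross_outer_d {m a b : ℕ} {p : ℕ × ℕ}
    (hp : PDiag (Finset.Icc 0 a ∪ Finset.Icc b m) p) (hab : a < b) :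
    NCross (a, b) p ∧ NCross p (a, b) := by
  obtain ⟨h1, h2, h3, _, _⟩ := hp
  rw [Finset.mem_union, Finset.mem_Icc, Finset.mem_Icc] at h1 h2
  constructor <;> · rintro (⟨c1, c2, c3⟩ | ⟨c1, c2, c3⟩) <;> omega

lemma ncross_in_out {m a b : ℕ} {p q : ℕ × ℕ} (hp : PDiag (Finset.Icc a b) p)
    (hq : PDiag (Finset.Icc 0 a ∪ Finset.Icc b m) q) :
    NCross p q ∧ NCross q p := by
  obtain ⟨h1, h2, h3, _, _⟩ := hp
  obtain ⟨g1, g2, g3, _, _⟩ := hq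
  rw [Finset.mem_Icc] at h1 h2
  rw [Finset.mem_union, Finset.mem_Icc, Finset.mem_Icc] at g1 g2
  constructor <;> · rintro (⟨c1, c2, c3⟩ | ⟨c1, c2, c3⟩) <;> omega

lemma not_pdiag_inner_self {a b : ℕ} : ¬ PDiag (Finset.Icc a b) (a, b) := by
  rintro ⟨_, _, _, _, ⟨o, ho⟩⟩
  simp only [outs, Finset.mem_filter, Finset.mem_Icc] at ho
  omega

lemma not_pdiag_outer_self {m a b : ℕ} :
    ¬ PDiag (Finset.Icc 0 a ∪ Finset.Icc b m) (a, b) := by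
  rintro ⟨_, _, _, ⟨t, ht⟩, _⟩
  simp only [betw, Finset.mem_filter, Finset.mem_union, Finset.mem_Icc] at ht
  omega

lemma inner_outer_disjoint {m a b : ℕ} {p : ℕ × ℕ} (hp : PDiag (Finset.Icc a b) p)
    (hq : PDiag (Finset.Icc 0 a ∪ Finset.Icc b m) p) : False := by
  obtain ⟨h1, h2, h3, _, _⟩ := hp
  obtain ⟨g1, g2, _, ⟨t, ht⟩, _⟩ := hq
  rw [Finset.mem_Icc] at h1 h2
  rw [Finset.mem_union, Finset.mem_Icc, Finset.mem_Icc] at g1 g2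
  simp only [betw, Finset.mem_filter, Finset.mem_union, Finset.mem_Icc] at ht
  omega

end Glue

/-- Lift a finset of pairs which are all diagonals to a finset of `Diagonal`s. -/
def liftD (m : ℕ) (S : Finset (ℕ × ℕ)) (h : ∀ p ∈ S, IsDiag m p) :
    Finset {p : ℕ × ℕ // IsDiag m p} :=
  S.attach.map ⟨fun q => ⟨q.1, h q.1 q.2⟩, by
    intro q r hqr
    simp only [Subtype.mk.injEq] at hqr
    exact Subtype.ext hqr⟩

lemma mem_liftD {m : ℕ} {S : Finset (ℕ × ℕ)} {h : ∀ p ∈ S, IsDiag m p}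
    {e : {p : ℕ × ℕ // IsDiag m p}} : e ∈ liftD m S h ↔ e.val ∈ S := by
  unfold liftD
  rw [Finset.mem_map]
  constructor
  · rintro ⟨q, _, rfl⟩
    exact q.2
  · intro he
    exact ⟨⟨e.val, he⟩, Finset.mem_attach _ _, Subtype.ext rfl⟩

lemma card_liftD {m : ℕ} {S : Finset (ℕ × ℕ)} {h : ∀ p ∈ S, IsDiag m p} :
    (liftD m S h).card = S.card := by
  unfold liftD
  rw [Finset.card_map, Finset.card_attach]

end Stmt16Aux



lemma ptZero_ne_ptInf (F : Type*) [Field F] : ptZero F ≠ ptInf F := by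
  rw [ptZero, ptInf]
  intro h
  rw [Projectivization.mk_eq_mk_iff] at h
  obtain ⟨u, hu⟩ := h
  have := congrArg Prod.fst hu
  simp [Units.smul_def, Prod.smul_def] at this

lemma p1_palette : ∀ t : P1 (ZMod 2),
    t = ptZero (ZMod 2) ∨ t = ptInf (ZMod 2) ∨ t = ptOne (ZMod 2) := by
  intro t
  induction t using Projectivization.ind with
  | h v hv =>
    obtain ⟨v1, v2⟩ := v
    have h2 : ∀ s : ZMod 2, s = 0 ∨ s = 1 := by decide
    rcases h2 v1 with rfl | rfl <;> rcases h2 v2 with rfl | rfl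
    · exact absurd rfl hv
    · right; left; rfl
    · left; rfl
    · right; right; rfl

lemma ncard_image_coe {γ : Type*} [DecidableEq γ] (A : Finset ℕ) (c : ℕ → γ) :
    (c '' (↑A : Set ℕ)).ncard = (A.image c).card := by
  rw [← Finset.coe_image, Set.ncard_coe_finset]

set_option maxHeartbeats 1000000 in
theorem stmt16 (F : Type*) [Field F] (m : ℕ) (z : ℕ → P1 (ZMod 2)) (y : ℕ → P1 F)
    (hz : XCond (ZMod 2) m z) (hy : XCond F m y) :
    (∃ T : Triangulation m, ProperDiags T z ∧ ¬ ProperDiags T y) ↔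
    ¬ ({d : Diagonal m | ¬ ValidDiag F m y d} ⊆
        {d : Diagonal m | ¬ ValidDiag (ZMod 2) m z d}) := by
  classical
  have hpal : ∃ w1 w2 w3 : P1 (ZMod 2), ∀ t : P1 (ZMod 2), t = w1 ∨ t = w2 ∨ t = w3 :=
    ⟨ptZero (ZMod 2), ptInf (ZMod 2), ptOne (ZMod 2), p1_palette⟩
  have hz0m : z 0 ≠ z m := by
    rw [hz.1, hz.2.1]
    exact ptZero_ne_ptInf _
  have hy0m : y 0 ≠ y m := by
    rw [hy.1, hy.2.1]
    exact ptZero_ne_ptInf _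
  open Stmt16Aux in
  constructor
  · rintro ⟨T, hTz, hTy⟩
    unfold ProperDiags at hTy
    push_neg at hTy
    obtain ⟨d0, hdT, hdy⟩ := hTy
    obtain ⟨⟨a, b⟩, hd⟩ := d0
    have hd1 : a + 2 ≤ b := hd.1
    have hd2 : b ≤ m := hd.2.1
    have hd3 : ¬(a = 0 ∧ b = m) := hd.2.2
    have hzab : z a ≠ z b := hTz _ hdT
    rw [Set.not_subset]
    refine ⟨⟨(a, b), hd⟩, ?_, ?_⟩
    · intro hv
      exact hv.1 hdy
    · simp only [Set.mem_setOf_eq, not_not]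
      have hPcard : (T.diags.image Subtype.val).card = m - 2 := by
        rw [Finset.card_image_of_injective _ Subtype.val_injective, T.card_eq]
      have hPIs : ∀ p ∈ T.diags.image Subtype.val, IsDiag m p := by
        intro p hp
        obtain ⟨e, _, rfl⟩ := Finset.mem_image.1 hp
        exact e.2
      have hPz : ∀ p ∈ T.diags.image Subtype.val, z p.1 ≠ z p.2 := by
        intro p hp
        obtain ⟨e, he, rfl⟩ := Finset.mem_image.1 hp
        exact hTz e he
      have hPN : ∀ p ∈ T.diags.image Subtype.val, ∀ q ∈ T.diags.image Subtype.val,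
          NCross p q := by
        intro p hp q hq
        obtain ⟨e, he, rfl⟩ := Finset.mem_image.1 hp
        obtain ⟨f, hf, rfl⟩ := Finset.mem_image.1 hq
        exact T.noncross e he f hf
      have hdP : ((a, b) : ℕ × ℕ) ∈ T.diags.image Subtype.val :=
        Finset.mem_image.2 ⟨⟨(a, b), hd⟩, hdT, rfl⟩
      have hdSin : ((a, b) : ℕ × ℕ) ∈
          (T.diags.image Subtype.val).filter (fun p => a ≤ p.1 ∧ p.2 ≤ b) :=
        Finset.mem_filter.2 ⟨hdP, le_rfl, le_rfl⟩
      have hsum := Finset.card_filter_add_card_filter_not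
        (s := T.diags.image Subtype.val) (p := fun p => a ≤ p.1 ∧ p.2 ≤ b)
      have hinP : ∀ p ∈ ((T.diags.image Subtype.val).filter
          (fun p => a ≤ p.1 ∧ p.2 ≤ b)).erase (a, b), PDiag (Finset.Icc a b) p := by
        intro p hp
        have hpf := Finset.mem_of_mem_erase hp
        have hpne := Finset.ne_of_mem_erase hp
        obtain ⟨hpP, hpa, hpb⟩ := Finset.mem_filter.1 hpf
        obtain ⟨hq1, hq2, hq3⟩ := hPIs p hpP
        refine ⟨Finset.mem_Icc.2 ⟨hpa, by omega⟩, Finset.mem_Icc.2 ⟨by omega, hpb⟩,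
          by omega, ⟨p.1 + 1, ?_⟩, ?_⟩
        · simp only [betw, Finset.mem_filter, Finset.mem_Icc]
          omega
        · rcases Nat.lt_or_ge a p.1 with h | h
          · refine ⟨a, ?_⟩
            simp only [outs, Finset.mem_filter, Finset.mem_Icc]
            omega
          · have hp2b : p.2 < b := by
              rcases Nat.lt_or_ge p.2 b with h2 | h2
              · exact h2
              · exact absurd (Prod.ext (by omega) (by omega)) hpne
            refine ⟨b, ?_⟩
            simp only [outs, Finset.mem_filter, Finset.mem_Icc]
            omega
      have houtP : ∀ p ∈ (T.diags.image Subtype.val).filter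
          (fun p => ¬(a ≤ p.1 ∧ p.2 ≤ b)), PDiag (Finset.Icc 0 a ∪ Finset.Icc b m) p := by
        intro p hp
        obtain ⟨hpP, hpno⟩ := Finset.mem_filter.1 hp
        obtain ⟨hq1, hq2, hq3⟩ := hPIs p hpP
        have hnc := hPN (a, b) hdP p hpP
        have hn1 : ¬(a < p.1 ∧ p.1 < b ∧ b < p.2) := fun hh => hnc (Or.inl hh)
        have hn2 : ¬(p.1 < a ∧ a < p.2 ∧ p.2 < b) := fun hh => hnc (Or.inr hh)
        have hkey : (p.1 ≤ a ∨ b ≤ p.1) ∧ (p.2 ≤ a ∨ b ≤ p.2) := by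
          constructor
          · by_contra hcc
            push_neg at hcc
            apply hn1
            omega
          · by_contra hcc
            push_neg at hcc
            apply hn2
            omega
        have hmemo : ∀ t, t ≤ a ∨ (b ≤ t ∧ t ≤ m) →
            t ∈ Finset.Icc 0 a ∪ Finset.Icc b m := by
          intro t ht
          rw [Finset.mem_union, Finset.mem_Icc, Finset.mem_Icc]
          omega
        refine ⟨hmemo p.1 (by omega), hmemo p.2 (by omega), by omega, ?_, ?_⟩
        · by_cases hc1 : p.2 ≤ a
          · refine ⟨p.1 + 1, ?_⟩
            simp only [betw, Finset.mem_filter]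
            exact ⟨hmemo _ (by omega), by omega, by omega⟩
          · by_cases hc2 : b ≤ p.1
            · refine ⟨p.1 + 1, ?_⟩
              simp only [betw, Finset.mem_filter]
              exact ⟨hmemo _ (by omega), by omega, by omega⟩
            · by_cases hc3 : p.1 < a
              · refine ⟨a, ?_⟩
                simp only [betw, Finset.mem_filter]
                exact ⟨hmemo _ (by omega), by omega, by omega⟩
              · refine ⟨b, ?_⟩
                simp only [betw, Finset.mem_filter]
                exact ⟨hmemo _ (by omega), by omega, by omega⟩
        · by_cases h0 : 0 < p.1
          · refine ⟨0, ?_⟩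
            simp only [outs, Finset.mem_filter]
            exact ⟨hmemo _ (by omega), by omega⟩
          · have hp2m : p.2 < m := by
              rcases Nat.lt_or_ge p.2 m with h2 | h2
              · exact h2
              · exact absurd ⟨by omega, by omega⟩ hq3
            refine ⟨m, ?_⟩
            simp only [outs, Finset.mem_filter]
            exact ⟨hmemo _ (by omega), by omega⟩
      have hNin : ∀ p ∈ ((T.diags.image Subtype.val).filter
            (fun p => a ≤ p.1 ∧ p.2 ≤ b)).erase (a, b),
          ∀ q ∈ ((T.diags.image Subtype.val).filter
            (fun p => a ≤ p.1 ∧ p.2 ≤ b)).erase (a, b), NCross p q := by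
        intro p hp q hq
        exact hPN p (Finset.mem_filter.1 (Finset.mem_of_mem_erase hp)).1
          q (Finset.mem_filter.1 (Finset.mem_of_mem_erase hq)).1
      have hNout : ∀ p ∈ (T.diags.image Subtype.val).filter
            (fun p => ¬(a ≤ p.1 ∧ p.2 ≤ b)),
          ∀ q ∈ (T.diags.image Subtype.val).filter
            (fun p => ¬(a ≤ p.1 ∧ p.2 ≤ b)), NCross p q := by
        intro p hp q hq
        exact hPN p (Finset.mem_filter.1 hp).1 q (Finset.mem_filter.1 hq).1
      have hcardIn : (Finset.Icc a b).card = b + 1 - a := Nat.card_Icc a b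
      have hdisj : Disjoint (Finset.Icc 0 a) (Finset.Icc b m) := by
        rw [Finset.disjoint_left]
        intro t h1 h2
        rw [Finset.mem_Icc] at h1 h2
        omega
      have hcardOut : (Finset.Icc 0 a ∪ Finset.Icc b m).card = (a + 1) + (m + 1 - b) := by
        rw [Finset.card_union_of_disjoint hdisj, Nat.card_Icc, Nat.card_Icc]
        omega
      have hb1 := card_noncross_le (Finset.Icc a b).card (Finset.Icc a b)
        (((T.diags.image Subtype.val).filter (fun p => a ≤ p.1 ∧ p.2 ≤ b)).erase (a, b))
        le_rfl hinP hNin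
      have hb2 := card_noncross_le (Finset.Icc 0 a ∪ Finset.Icc b m).card
        (Finset.Icc 0 a ∪ Finset.Icc b m)
        ((T.diags.image Subtype.val).filter (fun p => ¬(a ≤ p.1 ∧ p.2 ≤ b)))
        le_rfl houtP hNout
      have hecard := Finset.card_erase_of_mem hdSin
      have hSin1 : 1 ≤ ((T.diags.image Subtype.val).filter
          (fun p => a ≤ p.1 ∧ p.2 ≤ b)).card := Finset.card_pos.2 ⟨_, hdSin⟩
      refine ⟨hzab, ?_, ?_⟩
      · show 3 ≤ (z '' Set.Icc a b).ncard
        rw [← Finset.coe_Icc, ncard_image_coe]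
        have hadjz := hadj_icc (m := m) hz.2.2 hd2 hzab
        rcases Nat.lt_or_ge (Finset.Icc a b).card 4 with hlt | hge
        · exact three_colors_of_triangle (by omega) hadjz
        · obtain ⟨p, hpS, hpE⟩ := exists_ear (Finset.Icc a b) _ hinP hNin (by omega) hge
          have hppd := hinP p hpS
          obtain ⟨t, htA, ht1, ht2⟩ := ear_triple hppd hpE hadjz
          have hpz : z p.1 ≠ z p.2 :=
            hPz p (Finset.mem_filter.1 (Finset.mem_of_mem_erase hpS)).1
          exact three_colors_of_triple htA hppd.1 hppd.2.1 ht1 ht2 hpz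
      · show 3 ≤ (z '' (Set.Icc 0 a ∪ Set.Icc b m)).ncard
        rw [← Finset.coe_Icc, ← Finset.coe_Icc, ← Finset.coe_union, ncard_image_coe]
        have hadjz := hadj_out (m := m) hz.2.2 hd1 hd2 hzab hz0m
        rcases Nat.lt_or_ge (Finset.Icc 0 a ∪ Finset.Icc b m).card 4 with hlt | hge
        · exact three_colors_of_triangle (by omega) hadjz
        · obtain ⟨p, hpS, hpE⟩ := exists_ear (Finset.Icc 0 a ∪ Finset.Icc b m) _
            houtP hNout (by omega) hge
          have hppd := houtP p hpS
          obtain ⟨t, htA, ht1, ht2⟩ := ear_triple hppd hpE hadjz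
          have hpz : z p.1 ≠ z p.2 := hPz p (Finset.mem_filter.1 hpS).1
          exact three_colors_of_triple htA hppd.1 hppd.2.1 ht1 ht2 hpz
  · intro hns
    rw [Set.not_subset] at hns
    obtain ⟨d0, hdy, hdz⟩ := hns
    simp only [Set.mem_setOf_eq, not_not] at hdy hdz
    obtain ⟨⟨a, b⟩, hd⟩ := d0
    have hd1 : a + 2 ≤ b := hd.1
    have hd2 : b ≤ m := hd.2.1
    have hd3 : ¬(a = 0 ∧ b = m) := hd.2.2
    have hzab : z a ≠ z b := hdz.1
    have hz3in : 3 ≤ ((Finset.Icc a b).image z).card := by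
      have h := hdz.2.1
      rwa [show Set.Icc ((a, b) : ℕ × ℕ).1 ((a, b) : ℕ × ℕ).2 = Set.Icc a b from rfl,
        ← Finset.coe_Icc, ncard_image_coe] at h
    have hz3out : 3 ≤ ((Finset.Icc 0 a ∪ Finset.Icc b m).image z).card := by
      have h := hdz.2.2
      rwa [show Set.Icc 0 ((a, b) : ℕ × ℕ).1 = Set.Icc 0 a from rfl,
        show Set.Icc ((a, b) : ℕ × ℕ).2 m = Set.Icc b m from rfl,
        ← Finset.coe_Icc, ← Finset.coe_Icc (a := b), ← Finset.coe_union,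
        ncard_image_coe] at h
    have hcardIn : (Finset.Icc a b).card = b + 1 - a := Nat.card_Icc a b
    have hdisj : Disjoint (Finset.Icc 0 a) (Finset.Icc b m) := by
      rw [Finset.disjoint_left]
      intro t h1 h2
      rw [Finset.mem_Icc] at h1 h2
      omega
    have hcardOut : (Finset.Icc 0 a ∪ Finset.Icc b m).card = (a + 1) + (m + 1 - b) := by
      rw [Finset.card_union_of_disjoint hdisj, Nat.card_Icc, Nat.card_Icc]
      omega
    have hadjzin := hadj_icc (m := m) hz.2.2 hd2 hzab
    have hadjzout := hadj_out (m := m) hz.2.2 hd1 hd2 hzab hz0m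
    obtain ⟨Sin, hSinP, hSinc, hSinN, hSincard, hSinear⟩ :=
      constr (Finset.Icc a b).card (Finset.Icc a b) z le_rfl (by omega) hadjzin hz3in hpal
    obtain ⟨Sout, hSoutP, hSoutc, hSoutN, hSoutcard, hSoutear⟩ :=
      constr (Finset.Icc 0 a ∪ Finset.Icc b m).card (Finset.Icc 0 a ∪ Finset.Icc b m) z
        le_rfl (by omega) hadjzout hz3out hpal
    have hAllIs : ∀ p ∈ insert ((a, b) : ℕ × ℕ) (Sin ∪ Sout), IsDiag m p := by
      intro p hp
      rcases Finset.mem_insert.1 hp with rfl | hp2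
      · exact hd
      · rcases Finset.mem_union.1 hp2 with h | h
        · exact pdiag_icc_isdiag hd (hSinP p h)
        · exact pdiag_out_isdiag hd (hSoutP p h)
    have hAllN : ∀ p ∈ insert ((a, b) : ℕ × ℕ) (Sin ∪ Sout),
        ∀ q ∈ insert ((a, b) : ℕ × ℕ) (Sin ∪ Sout), NCross p q := by
      intro p hp q hq
      rcases Finset.mem_insert.1 hp with rfl | hp2
      · rcases Finset.mem_insert.1 hq with rfl | hq2
        · rintro (⟨c1, c2, c3⟩ | ⟨c1, c2, c3⟩) <;> omega
        · rcases Finset.mem_union.1 hq2 with h | h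
          · exact (ncross_inner_d (hSinP q h)).1
          · exact (ncross_outer_d (hSoutP q h) (by omega)).1
      · rcases Finset.mem_union.1 hp2 with hpin | hpout
        · rcases Finset.mem_insert.1 hq with rfl | hq2
          · exact (ncross_inner_d (hSinP p hpin)).2
          · rcases Finset.mem_union.1 hq2 with h | h
            · exact hSinN p hpin q h
            · exact (ncross_in_out (hSinP p hpin) (hSoutP q h)).1
        · rcases Finset.mem_insert.1 hq with rfl | hq2
          · exact (ncross_outer_d (hSoutP p hpout) (by omega)).2
          · rcases Finset.mem_union.1 hq2 with h | h
            · exact (ncross_in_out (hSinP q h) (hSoutP p hpout)).2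
            · exact hSoutN p hpout q h
    have hdnotin : ((a, b) : ℕ × ℕ) ∉ Sin ∪ Sout := by
      intro hmem
      rcases Finset.mem_union.1 hmem with h | h
      · exact not_pdiag_inner_self (hSinP _ h)
      · exact not_pdiag_outer_self (hSoutP _ h)
    have hIOdisj : Disjoint Sin Sout :=
      Finset.disjoint_left.2 fun {p} hp hq =>
        (inner_outer_disjoint (hSinP p hp) (hSoutP p hq)).elim
    have hScard : (insert ((a, b) : ℕ × ℕ) (Sin ∪ Sout)).card = m - 2 := by
      rw [Finset.card_insert_of_notMem hdnotin, Finset.card_union_of_disjoint hIOdisj,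
        hSincard, hSoutcard, hcardIn, hcardOut]
      omega
    refine ⟨⟨liftD m (insert ((a, b) : ℕ × ℕ) (Sin ∪ Sout)) hAllIs, ?_, ?_⟩, ?_, ?_⟩
    · intro e he f hf hc
      exact hAllN e.val ((mem_liftD (h := hAllIs)).1 he) f.val ((mem_liftD (h := hAllIs)).1 hf) hc
    · rw [card_liftD]
      exact hScard
    · intro e he
      have hm2 := (mem_liftD (h := hAllIs)).1 he
      rcases Finset.mem_insert.1 hm2 with heq | hm3
      · rw [heq]
        exact hzab
      · rcases Finset.mem_union.1 hm3 with h | h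
        · exact hSinc _ h
        · exact hSoutc _ h
    · intro hPD
      by_cases hyab : y a = y b
      · exact hPD ⟨(a, b), hd⟩ ((mem_liftD (h := hAllIs)).2 (Finset.mem_insert_self _ _)) hyab
      · have hQR : ¬(3 ≤ (y '' Set.Icc a b).ncard ∧
            3 ≤ (y '' (Set.Icc 0 a ∪ Set.Icc b m)).ncard) := by
          intro h
          exact hdy ⟨hyab, h.1, h.2⟩
        rcases not_and_or.1 hQR with hQ | hR
        · have hQ2 : ((Finset.Icc a b).image y).card ≤ 2 := by
            rw [← Finset.coe_Icc, ncard_image_coe] at hQ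
            omega
          have hadjy := hadj_icc (m := m) hy.2.2 hd2 hyab
          have h4 : 4 ≤ (Finset.Icc a b).card := by
            by_contra hcc
            have h3c := three_colors_of_triangle (A := Finset.Icc a b) (by omega) hadjy
            omega
          obtain ⟨p, hpS, hpE⟩ := hSinear h4
          have hppd := hSinP p hpS
          obtain ⟨t, htA, ht1, ht2⟩ := ear_triple hppd hpE hadjy
          have hyp : y p.1 = y p.2 := eq_of_two_colors htA hppd.1 hppd.2.1 hQ2 ht1 ht2
          exact hPD ⟨p, hAllIs p (Finset.mem_insert_of_mem (Finset.mem_union_left _ hpS))⟩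
            ((mem_liftD (h := hAllIs)).2 (Finset.mem_insert_of_mem (Finset.mem_union_left _ hpS))) hyp
        · have hR2 : ((Finset.Icc 0 a ∪ Finset.Icc b m).image y).card ≤ 2 := by
            rw [← Finset.coe_Icc, ← Finset.coe_Icc (a := b), ← Finset.coe_union,
              ncard_image_coe] at hR
            omega
          have hadjy := hadj_out (m := m) hy.2.2 hd1 hd2 hyab hy0m
          have h4 : 4 ≤ (Finset.Icc 0 a ∪ Finset.Icc b m).card := by
            by_contra hcc
            have h3c := three_colors_of_triangle
              (A := Finset.Icc 0 a ∪ Finset.Icc b m) (by omega) hadjy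
            omega
          obtain ⟨p, hpS, hpE⟩ := hSoutear h4
          have hppd := hSoutP p hpS
          obtain ⟨t, htA, ht1, ht2⟩ := ear_triple hppd hpE hadjy
          have hyp : y p.1 = y p.2 := eq_of_two_colors htA hppd.1 hppd.2.1 hR2 ht1 ht2
          exact hPD ⟨p, hAllIs p (Finset.mem_insert_of_mem (Finset.mem_union_right _ hpS))⟩
            ((mem_liftD (h := hAllIs)).2 (Finset.mem_insert_of_mem (Finset.mem_union_right _ hpS))) hyp
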